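/- Let c₂ = ∑_{l=1}^∞ 2^{−l}·l·ln l, p†_d(l) = 2^{−l}·(1 + d(l·ln l − c₂·l/2)), and p*(l) = 2^{−l} for l ≥ 1. For every ε > 0 there exist d₀ > 0 and κ < ∞ such that for all 0 < d < d₀: | D(p†_d ‖ p*) − (d²/(2 ln 2))·( (3/2)·c₂² + ∑_{l≥1} 2^{−l}(l ln l)² − c₂·∑_{l≥1} 2^{−l} l² ln l ) | ≤ κ·d^{3−ε}. -/

import Mathlib

/-- `c₂ = ∑_{l≥1} 2^{-l} l ln l`. -/
noncomputable def c2 : ℝ := ∑' l : ℕ+, (2 : ℝ) ^ (-((l : ℕ) : ℤ)) * (l : ℝ) * Real.log (l : ℝ)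

/-- The near-optimal run-length distribution
`p†_d(l) = 2^{-l}(1 + d(l ln l - c₂ l / 2))`. -/
noncomputable def pdag (d : ℝ) (l : ℕ+) : ℝ :=
  (2 : ℝ) ^ (-((l : ℕ) : ℤ)) * (1 + d * ((l : ℝ) * Real.log (l : ℝ) - c2 * (l : ℝ) / 2))

/-! ### Auxiliary definitions and lemmas -/

noncomputable def w (n : ℕ) : ℝ := (2:ℝ)⁻¹ ^ n

lemma w_pos (n : ℕ) : 0 < w n := by unfold w; positivity

lemma two_zpow_eq (n : ℕ) : (2:ℝ) ^ (-(n:ℤ)) = w n := by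
  rw [zpow_neg, zpow_natCast, w, inv_pow]

lemma summable_w_pow (k : ℕ) : Summable (fun n : ℕ => w n * (n:ℝ)^k) := by
  have : Summable (fun n : ℕ => (n:ℝ)^k * (2:ℝ)⁻¹ ^ n) :=
    summable_pow_mul_geometric_of_norm_lt_one k (by norm_num)
  simpa [w, mul_comm] using this

lemma summable_of_poly_bound {g : ℕ → ℝ} (C : ℝ) (k : ℕ)
    (h : ∀ n, |g n| ≤ C * (n:ℝ)^k) : Summable (fun n => w n * g n) := by
  apply Summable.of_norm_bounded (g := fun n => C * (w n * (n:ℝ)^k))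
    (((summable_w_pow k)).mul_left C)
  intro n
  have hw := (w_pos n).le
  calc ‖w n * g n‖ = w n * |g n| := by
        rw [norm_mul, Real.norm_eq_abs, Real.norm_eq_abs, abs_of_nonneg hw]
    _ ≤ w n * (C * (n:ℝ)^k) := by apply mul_le_mul_of_nonneg_left (h n) hw
    _ = C * (w n * (n:ℝ)^k) := by ring

lemma abs_log_nat_le (n : ℕ) : |Real.log n| ≤ (n:ℝ) := by
  rcases Nat.eq_zero_or_pos n with h | h
  · simp [h]
  · have h1 : (1:ℝ) ≤ n := by exact_mod_cast h
    rw [abs_of_nonneg (Real.log_nonneg h1)]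
    have := Real.log_le_sub_one_of_pos (by linarith : (0:ℝ) < n)
    linarith

lemma tsum_w : ∑' n : ℕ, w n = 2 := by
  have := tsum_geometric_of_lt_one (r := (2:ℝ)⁻¹) (by norm_num) (by norm_num)
  simp only [w]; rw [this]; norm_num

lemma tsum_w_mul : ∑' n : ℕ, w n * (n:ℝ) = 2 := by
  have h := tsum_coe_mul_geometric_of_norm_lt_one (𝕜 := ℝ) (r := 2⁻¹)
    (by rw [Real.norm_eq_abs, abs_of_pos] <;> norm_num)
  have e : ∑' n : ℕ, w n * (n:ℝ) = ∑' n : ℕ, (n:ℝ) * (2:ℝ)⁻¹ ^ n := by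
    congr 1; funext n; rw [w]; ring
  rw [e, h]; norm_num

lemma tsum_w_sq : ∑' n : ℕ, w n * (n:ℝ)^2 = 6 := by
  have hs2 := summable_w_pow 2
  have hs1 := summable_w_pow 1
  have hs0 := summable_w_pow 0
  have hshift := Summable.tsum_eq_zero_add hs2
  have hexp : (fun n : ℕ => w (n+1) * ((n+1:ℕ):ℝ)^2)
      = fun n => 2⁻¹ * (w n * (n:ℝ)^2) + ((w n * (n:ℝ)^1) + 2⁻¹ * (w n * (n:ℝ)^0)) := by
    funext n
    have hw : w (n+1) = 2⁻¹ * w n := by rw [w, w, pow_succ]; ring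
    rw [hw]; push_cast; ring
  rw [hexp] at hshift
  rw [Summable.tsum_add (hs2.mul_left _) (hs1.add (hs0.mul_left _)), Summable.tsum_add hs1 (hs0.mul_left _),
    tsum_mul_left, tsum_mul_left] at hshift
  have h1 : ∑' n : ℕ, w n * (n:ℝ)^1 = 2 := by simpa using tsum_w_mul
  have h0 : ∑' n : ℕ, w n * (n:ℝ)^0 = 2 := by simpa using tsum_w
  rw [h1, h0] at hshift
  have : ∑' n : ℕ, w n * (n:ℝ)^2 = w 0 * 0^2 + (2⁻¹ * (∑' n : ℕ, w n * (n:ℝ)^2) + (2 + 2⁻¹*2)) := by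
    simpa using hshift
  linarith [this]

lemma pnat_tsum_eq (g : ℕ → ℝ) (h0 : g 0 = 0) : ∑' l : ℕ+, g l = ∑' n : ℕ, g n := by
  apply Function.Injective.tsum_eq (g := fun l : ℕ+ => (l : ℕ))
  · exact fun a b h => PNat.coe_injective h
  · intro x hx
    rcases Nat.eq_zero_or_pos x with h | h
    · exact absurd (h ▸ h0) hx
    · exact ⟨⟨x, h⟩, rfl⟩

lemma taylor_bound {x : ℝ} (hx : -2⁻¹ ≤ x) :
    |(1+x) * Real.log (1+x) - (x + x^2/2)| ≤ 11 * |x|^3 := by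
  rcases le_or_gt |x| 2⁻¹ with h | h
  · have h1 : |(-x)| < 1 := by rw [abs_neg]; linarith
    have key := Real.abs_log_sub_add_sum_range_le h1 2
    have hsum : (∑ i ∈ Finset.range 2, (-x) ^ (i + 1) / (i + 1)) = -x + x^2/2 := by
      rw [Finset.sum_range_succ, Finset.sum_range_succ, Finset.sum_range_zero]
      push_cast; ring
    rw [hsum, abs_neg, sub_neg_eq_add] at key
    have hden : (2:ℝ)⁻¹ ≤ 1 - |x| := by linarith
    have hx3 : (0:ℝ) ≤ |x|^3 := by positivity
    have key2 : |Real.log (1+x) - (x - x^2/2)| ≤ 2 * |x|^3 := by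
      have e : Real.log (1+x) - (x - x^2/2) = (-x + x^2/2) + Real.log (1+x) := by ring
      rw [e]
      refine key.trans ?_
      rw [div_le_iff₀ (by linarith)]
      have e3 : |x| ^ (2+1) = |x|^3 := by norm_num
      rw [e3]; nlinarith
    set E := Real.log (1+x) - (x - x^2/2) with hE
    have hlog : Real.log (1+x) = (x - x^2/2) + E := by rw [hE]; ring
    have e2 : (1+x) * Real.log (1+x) - (x + x^2/2) = (1+x)*E - x^3/2 := by
      rw [hlog]; ring
    rw [e2]
    have h1x : |1+x| ≤ 3/2 := by
      rw [abs_le]; constructor <;> [linarith [neg_abs_le x]; linarith [le_abs_self x]]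
    calc |(1+x)*E - x^3/2| ≤ |(1+x)*E| + |x^3/2| := abs_sub _ _
      _ ≤ (3/2) * (2*|x|^3) + |x|^3/2 := by
          rw [abs_mul]
          refine add_le_add (mul_le_mul h1x key2 (abs_nonneg _) (by norm_num)) ?_
          rw [abs_div, abs_pow]; norm_num
      _ ≤ 11 * |x|^3 := by nlinarith
  · have hxpos : (2:ℝ)⁻¹ < x := by
      rcases abs_cases x with ⟨he, _⟩ | ⟨he, _⟩
      · linarith
      · linarith
    have hlog0 : 0 ≤ Real.log (1+x) := Real.log_nonneg (by linarith)
    have hlogx : Real.log (1+x) ≤ x := by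
      have := Real.log_le_sub_one_of_pos (show (0:ℝ) < 1+x by linarith)
      linarith
    have hax : |x| = x := abs_of_pos (by linarith)
    rw [hax, abs_le]
    constructor <;> nlinarith [mul_nonneg (by linarith : (0:ℝ) ≤ 1+x) hlog0,
      mul_le_mul_of_nonneg_left hlogx (by linarith : (0:ℝ) ≤ 1+x)]

/-! ### Lemmas about `c2` and the perturbation `ff` -/

noncomputable def g1 (n : ℕ) : ℝ := (n:ℝ) * Real.log n

noncomputable def ff (n : ℕ) : ℝ := g1 n - c2 * (n:ℝ) / 2

lemma g1_zero : g1 0 = 0 := by simp [g1]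
lemma ff_zero : ff 0 = 0 := by simp [ff, g1]

lemma g1_nonneg (n : ℕ) : 0 ≤ g1 n := by
  rcases Nat.eq_zero_or_pos n with h | h
  · simp [h, g1]
  · exact mul_nonneg (Nat.cast_nonneg n) (Real.log_nonneg (by exact_mod_cast h))

lemma abs_g1_le (n : ℕ) : |g1 n| ≤ (n:ℝ)^2 := by
  rw [g1, abs_mul, abs_of_nonneg (Nat.cast_nonneg n), sq]
  exact mul_le_mul_of_nonneg_left (abs_log_nat_le n) (Nat.cast_nonneg n)

lemma c2_nonneg : 0 ≤ c2 := by
  apply tsum_nonneg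
  intro l
  have h1 : (1:ℝ) ≤ (l:ℝ) := by exact_mod_cast l.one_le
  have := two_zpow_eq (l:ℕ)
  have hw := (w_pos (l:ℕ)).le
  rw [this]
  exact mul_nonneg (mul_nonneg hw (by linarith)) (Real.log_nonneg h1)

lemma c2_eq_tsum_nat : c2 = ∑' n : ℕ, w n * g1 n := by
  rw [c2]
  have e : ∀ l : ℕ+, (2:ℝ) ^ (-((l:ℕ):ℤ)) * (l:ℝ) * Real.log (l:ℝ)
      = w (l:ℕ) * g1 (l:ℕ) := by
    intro l
    rw [two_zpow_eq, g1, mul_assoc]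
  rw [tsum_congr e]
  exact pnat_tsum_eq (fun n => w n * g1 n) (by simp [g1_zero])

lemma abs_ff_le (n : ℕ) : |ff n| ≤ (1 + c2/2) * (n:ℝ)^2 := by
  have h1 : |c2 * (n:ℝ) / 2| ≤ (c2/2) * (n:ℝ)^2 := by
    rcases Nat.eq_zero_or_pos n with h | h
    · simp [h]
    · have hn1 : (1:ℝ) ≤ (n:ℝ) := by exact_mod_cast h
      rw [abs_of_nonneg (div_nonneg (mul_nonneg c2_nonneg (Nat.cast_nonneg n)) (by norm_num))]
      have hn2 : (n:ℝ) ≤ (n:ℝ)^2 := by nlinarith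
      have hmul := mul_le_mul_of_nonneg_left hn2 c2_nonneg
      linarith
  calc |ff n| ≤ |g1 n| + |c2 * (n:ℝ)/2| := abs_sub _ _
    _ ≤ (n:ℝ)^2 + (c2/2) * (n:ℝ)^2 := add_le_add (abs_g1_le n) h1
    _ = (1 + c2/2) * (n:ℝ)^2 := by ring

lemma ff_lower (n : ℕ) : -(c2/2 * Real.exp (c2/2)) ≤ ff n := by
  rcases le_or_gt 0 (ff n) with h | h
  · have : 0 ≤ c2/2 * Real.exp (c2/2) :=
      mul_nonneg (by linarith [c2_nonneg]) (Real.exp_pos _).le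
    linarith
  · have hn : 0 < n := by
      by_contra hc
      push_neg at hc
      interval_cases n
      · rw [ff_zero] at h; exact lt_irrefl 0 h
    have hn1 : (1:ℝ) ≤ (n:ℝ) := by exact_mod_cast hn
    have hnpos : (0:ℝ) < n := by linarith
    have hlog : Real.log n < c2/2 := by
      have : (n:ℝ) * Real.log n < c2 * n / 2 := by rw [ff, sub_neg] at h; exact h
      nlinarith
    have hexp : (n:ℝ) ≤ Real.exp (c2/2) := by
      rw [← Real.exp_log hnpos]
      exact Real.exp_le_exp.2 hlog.le
    have : -(c2/2 * Real.exp (c2/2)) ≤ -(c2/2) * n := by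
      rw [neg_mul]
      apply neg_le_neg
      exact mul_le_mul_of_nonneg_left hexp (by linarith [c2_nonneg])
    refine this.trans ?_
    rw [ff]
    nlinarith [g1_nonneg n]

lemma summable_w_mul_of_bound {g : ℕ → ℝ} (C : ℝ) (k : ℕ)
    (h : ∀ n, |g n| ≤ C * (n:ℝ)^k) : Summable (fun n => w n * g n) :=
  summable_of_poly_bound C k h

lemma summable_wff : Summable (fun n => w n * ff n) :=
  summable_of_poly_bound (1 + c2/2) 2 abs_ff_le

lemma summable_wg1 : Summable (fun n => w n * g1 n) :=
  summable_of_poly_bound 1 2 (fun n => by simpa using abs_g1_le n)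

lemma summable_wff2 : Summable (fun n => w n * (ff n)^2) := by
  apply summable_of_poly_bound ((1 + c2/2)^2) 4
  intro n
  have h := abs_ff_le n
  have h0 := abs_nonneg (ff n)
  calc |(ff n)^2| = |ff n|^2 := by rw [abs_pow]
    _ ≤ ((1 + c2/2) * (n:ℝ)^2)^2 := by apply pow_le_pow_left₀ h0 h
    _ = (1 + c2/2)^2 * (n:ℝ)^4 := by ring

lemma summable_wff3 : Summable (fun n => w n * |ff n|^3) := by
  apply summable_of_poly_bound ((1 + c2/2)^3) 6
  intro n
  have h := abs_ff_le n
  have h0 := abs_nonneg (ff n)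
  calc |(|ff n|)^3| = |ff n|^3 := by rw [abs_pow, abs_abs]
    _ ≤ ((1 + c2/2) * (n:ℝ)^2)^3 := by apply pow_le_pow_left₀ h0 h
    _ = (1 + c2/2)^3 * (n:ℝ)^6 := by ring

lemma summable_wg1sq : Summable (fun n => w n * (g1 n)^2) := by
  apply summable_of_poly_bound 1 4
  intro n
  have h := abs_g1_le n
  have h0 := abs_nonneg (g1 n)
  calc |(g1 n)^2| = |g1 n|^2 := by rw [abs_pow]
    _ ≤ ((n:ℝ)^2)^2 := by apply pow_le_pow_left₀ h0 h
    _ = 1 * (n:ℝ)^4 := by ring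

lemma summable_wn2log : Summable (fun n => w n * ((n:ℝ)^2 * Real.log n)) := by
  apply summable_of_poly_bound 1 3
  intro n
  rw [abs_mul, abs_pow, abs_of_nonneg (show (0:ℝ) ≤ (n:ℝ) from Nat.cast_nonneg n)]
  calc (n:ℝ)^2 * |Real.log n| ≤ (n:ℝ)^2 * (n:ℝ) :=
        mul_le_mul_of_nonneg_left (abs_log_nat_le n) (by positivity)
    _ = 1 * (n:ℝ)^3 := by ring

lemma tsum_wff : ∑' n : ℕ, w n * ff n = 0 := by
  have e : (fun n : ℕ => w n * ff n)
      = fun n => w n * g1 n - (c2/2) * (w n * (n:ℝ)) := by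
    funext n; rw [ff]; ring
  rw [e, Summable.tsum_sub summable_wg1 ((summable_of_poly_bound 1 1 (fun n => by
      rw [pow_one, one_mul, abs_of_nonneg (show (0:ℝ) ≤ (n:ℝ) from Nat.cast_nonneg n)])).mul_left _), tsum_mul_left,
    tsum_w_mul, ← c2_eq_tsum_nat]
  ring

lemma tsum_wff2 : ∑' n : ℕ, w n * (ff n)^2
    = (3/2) * c2^2 + (∑' n : ℕ, w n * (g1 n)^2)
      - c2 * (∑' n : ℕ, w n * ((n:ℝ)^2 * Real.log n)) := by
  have e : (fun n : ℕ => w n * (ff n)^2)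
      = fun n => (w n * (g1 n)^2 - c2 * (w n * ((n:ℝ)^2 * Real.log n)))
        + (c2^2/4) * (w n * (n:ℝ)^2) := by
    funext n
    rw [ff, g1]
    ring
  rw [e, Summable.tsum_add (summable_wg1sq.sub (summable_wn2log.mul_left _))
      ((summable_w_pow 2).mul_left _),
    Summable.tsum_sub summable_wg1sq (summable_wn2log.mul_left _), tsum_mul_left, tsum_mul_left,
    tsum_w_sq]
  ring

/-- Second-order expansion of the KL divergence (in bits) between `p†_d` and the
geometric distribution `p*(l) = 2^{-l}`:
`D(p†_d‖p*) = (d²/(2 ln 2))·((3/2)c₂² + ∑ 2^{-l}(l ln l)² − c₂ ∑ 2^{-l} l² ln l) + O(d^{3-ε})`. -/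
theorem stmt_12 :
    ∀ ε : ℝ, 0 < ε →
      ∃ d₀ : ℝ, 0 < d₀ ∧ ∃ κ : ℝ,
        ∀ d : ℝ, 0 < d → d < d₀ →
          |(∑' l : ℕ+, pdag d l * Real.logb 2 (pdag d l / (2 : ℝ) ^ (-((l : ℕ) : ℤ)))) -
              d ^ 2 / (2 * Real.log 2) *
                ((3 / 2) * c2 ^ 2 +
                  (∑' l : ℕ+,
                    (2 : ℝ) ^ (-((l : ℕ) : ℤ)) * ((l : ℝ) * Real.log (l : ℝ)) ^ 2) -
                  c2 * (∑' l : ℕ+,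
                    (2 : ℝ) ^ (-((l : ℕ) : ℤ)) * (l : ℝ) ^ 2 * Real.log (l : ℝ)))| ≤
            κ * d ^ (3 - ε) := by
  intro ε hε
  obtain ⟨B, hB⟩ : ∃ B : ℝ, B = c2/2 * Real.exp (c2/2) + 1 := ⟨_, rfl⟩
  have hBpos : 0 < B := by
    have : 0 ≤ c2/2 * Real.exp (c2/2) :=
      mul_nonneg (by linarith [c2_nonneg]) (Real.exp_pos _).le
    rw [hB]; linarith
  refine ⟨min 1 (1/(2*B)), lt_min one_pos (by positivity), ?_⟩
  obtain ⟨K, hK⟩ : ∃ K : ℝ, K = ∑' n : ℕ, w n * |ff n|^3 := ⟨_, rfl⟩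
  have hKnn : 0 ≤ K := hK ▸ tsum_nonneg (fun n => mul_nonneg (w_pos n).le (by positivity))
  have hlog2 : 0 < Real.log 2 := Real.log_pos (by norm_num)
  refine ⟨11 * K / Real.log 2, ?_⟩
  intro d hd hdlt
  have hd1 : d ≤ 1 := le_of_lt (lt_of_lt_of_le hdlt (min_le_left _ _))
  have hdB : d ≤ 1/(2*B) := le_of_lt (lt_of_lt_of_le hdlt (min_le_right _ _))
  -- lower bound on d * ff n
  have hd_lb : ∀ n : ℕ, -2⁻¹ ≤ d * ff n := by
    intro n
    have h1 : -(B - 1) ≤ ff n := by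
      have := ff_lower n
      rw [hB]; push_cast; linarith
    have h2 : -(d * B) ≤ d * ff n := by
      have : d * (-(B-1)) ≤ d * ff n := mul_le_mul_of_nonneg_left h1 hd.le
      nlinarith
    have h3 : d * B ≤ 2⁻¹ := by
      calc d * B ≤ (1/(2*B)) * B := mul_le_mul_of_nonneg_right hdB (by linarith)
        _ = 2⁻¹ := by field_simp
    linarith
  -- the remainder function
  obtain ⟨H, hH⟩ : ∃ H : ℕ → ℝ, H = fun n =>
    (1 + d * ff n) * Real.log (1 + d * ff n) - (d * ff n + (d * ff n)^2/2) := ⟨_, rfl⟩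
  have hHbound : ∀ n, |H n| ≤ 11 * d^3 * |ff n|^3 := by
    intro n
    have := taylor_bound (hd_lb n)
    rw [hH]
    simp only []
    calc |(1 + d * ff n) * Real.log (1 + d * ff n) - (d * ff n + (d * ff n)^2/2)|
        ≤ 11 * |d * ff n|^3 := this
      _ = 11 * d^3 * |ff n|^3 := by
          rw [abs_mul, mul_pow, abs_of_pos hd]; ring
  have hsumH : Summable (fun n => w n * H n) := by
    apply summable_of_poly_bound (11 * d^3 * (1 + c2/2)^3) 6
    intro n
    refine (hHbound n).trans ?_
    have h := abs_ff_le n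
    have h0 := abs_nonneg (ff n)
    have : |ff n|^3 ≤ ((1 + c2/2) * (n:ℝ)^2)^3 := pow_le_pow_left₀ h0 h 3
    calc 11 * d^3 * |ff n|^3 ≤ 11 * d^3 * ((1 + c2/2) * (n:ℝ)^2)^3 := by
          apply mul_le_mul_of_nonneg_left this (by positivity)
      _ = 11 * d^3 * (1 + c2/2)^3 * (n:ℝ)^6 := by ring
  -- pointwise identity for the KL summand
  have hterm : ∀ l : ℕ+, pdag d l * Real.logb 2 (pdag d l / (2:ℝ) ^ (-((l:ℕ):ℤ)))
      = ((d * (w (l:ℕ) * ff (l:ℕ)) + (d^2/2) * (w (l:ℕ) * (ff (l:ℕ))^2))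
          + w (l:ℕ) * H (l:ℕ)) / Real.log 2 := by
    intro l
    have hpd : pdag d l = w (l:ℕ) * (1 + d * ff (l:ℕ)) := by
      rw [pdag, two_zpow_eq, ff, g1]
    have hdiv : pdag d l / (2:ℝ) ^ (-((l:ℕ):ℤ)) = 1 + d * ff (l:ℕ) := by
      rw [hpd, two_zpow_eq]
      exact mul_div_cancel_left₀ _ (ne_of_gt (w_pos _))
    rw [hdiv, hpd, Real.logb]
    simp only [hH]
    ring
  -- convert the KL sum
  have hsum_eq : (∑' l : ℕ+, pdag d l * Real.logb 2 (pdag d l / (2:ℝ) ^ (-((l:ℕ):ℤ))))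
      = (∑' n : ℕ, ((d * (w n * ff n) + (d^2/2) * (w n * (ff n)^2)) + w n * H n))
          / Real.log 2 := by
    rw [tsum_congr hterm]
    rw [pnat_tsum_eq (fun n => ((d * (w n * ff n) + (d^2/2) * (w n * (ff n)^2))
        + w n * H n) / Real.log 2) (by simp [ff_zero, hH, ff_zero])]
    exact tsum_div_const
  -- split the tsum
  have hsplit : (∑' n : ℕ, ((d * (w n * ff n) + (d^2/2) * (w n * (ff n)^2)) + w n * H n))
      = (d^2/2) * (∑' n : ℕ, w n * (ff n)^2) + ∑' n : ℕ, w n * H n := by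
    rw [Summable.tsum_add ((summable_wff.mul_left d).add (summable_wff2.mul_left _)) hsumH,
      Summable.tsum_add (summable_wff.mul_left d) (summable_wff2.mul_left _),
      tsum_mul_left, tsum_mul_left, tsum_wff]
    ring
  -- identify the target sums
  have hQ : (∑' l : ℕ+, (2:ℝ) ^ (-((l:ℕ):ℤ)) * ((l:ℝ) * Real.log (l:ℝ))^2)
      = ∑' n : ℕ, w n * (g1 n)^2 := by
    have e : ∀ l : ℕ+, (2:ℝ) ^ (-((l:ℕ):ℤ)) * ((l:ℝ) * Real.log (l:ℝ))^2
        = w (l:ℕ) * (g1 (l:ℕ))^2 := by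
      intro l; rw [two_zpow_eq, g1]
    rw [tsum_congr e]
    exact pnat_tsum_eq (fun n => w n * (g1 n)^2) (by simp [g1_zero])
  have hP : (∑' l : ℕ+, (2:ℝ) ^ (-((l:ℕ):ℤ)) * (l:ℝ)^2 * Real.log (l:ℝ))
      = ∑' n : ℕ, w n * ((n:ℝ)^2 * Real.log n) := by
    have e : ∀ l : ℕ+, (2:ℝ) ^ (-((l:ℕ):ℤ)) * (l:ℝ)^2 * Real.log (l:ℝ)
        = w (l:ℕ) * (((l:ℕ):ℝ)^2 * Real.log ((l:ℕ):ℝ)) := by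
      intro l; rw [two_zpow_eq, mul_assoc]
    rw [tsum_congr e]
    exact pnat_tsum_eq (fun n => w n * ((n:ℝ)^2 * Real.log n)) (by simp)
  obtain ⟨R, hR⟩ : ∃ R : ℝ, R = ∑' n : ℕ, w n * H n := ⟨_, rfl⟩
  -- main expression equals R / log 2
  have hmain : (∑' l : ℕ+, pdag d l * Real.logb 2 (pdag d l / (2:ℝ) ^ (-((l:ℕ):ℤ))))
      - d^2 / (2 * Real.log 2) *
        ((3/2) * c2^2 + (∑' l : ℕ+, (2:ℝ) ^ (-((l:ℕ):ℤ)) * ((l:ℝ) * Real.log (l:ℝ))^2)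
          - c2 * (∑' l : ℕ+, (2:ℝ) ^ (-((l:ℕ):ℤ)) * (l:ℝ)^2 * Real.log (l:ℝ)))
      = R / Real.log 2 := by
    rw [hsum_eq, hsplit, hQ, hP, ← tsum_wff2, ← hR]
    field_simp
    ring
  rw [hmain]
  -- bound |R|
  have hRbound : |R| ≤ 11 * d^3 * K := by
    rw [hR]
    calc |∑' n : ℕ, w n * H n| ≤ ∑' n : ℕ, |w n * H n| := by
          have h := norm_tsum_le_tsum_norm (f := fun n => w n * H n)
            (by simpa [Real.norm_eq_abs, abs_mul] using hsumH.abs)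
          simpa [Real.norm_eq_abs, abs_mul] using h
      _ ≤ ∑' n : ℕ, 11 * d^3 * (w n * |ff n|^3) := by
          apply Summable.tsum_le_tsum _ hsumH.abs ((summable_wff3).mul_left _)
          intro n
          rw [abs_mul, abs_of_pos (w_pos n)]
          calc w n * |H n| ≤ w n * (11 * d^3 * |ff n|^3) :=
                mul_le_mul_of_nonneg_left (hHbound n) (w_pos n).le
            _ = 11 * d^3 * (w n * |ff n|^3) := by ring
      _ = 11 * d^3 * K := by rw [tsum_mul_left, hK]
  have hfinal : |R / Real.log 2| ≤ (11 * K / Real.log 2) * d^3 := by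
    rw [abs_div, abs_of_pos hlog2, div_le_iff₀ hlog2]
    calc |R| ≤ 11 * d^3 * K := hRbound
      _ = (11 * K / Real.log 2) * d^3 * Real.log 2 := by field_simp
  refine hfinal.trans ?_
  have hκ : 0 ≤ 11 * K / Real.log 2 := by positivity
  apply mul_le_mul_of_nonneg_left _ hκ
  -- d^3 ≤ d^(3-ε)
  have h3 : d^(3:ℕ) = d ^ ((3:ℕ):ℝ) := (Real.rpow_natCast d 3).symm
  rw [h3]
  have : d ^ ((3:ℕ):ℝ) ≤ d ^ (3 - ε) := by
    apply Real.rpow_le_rpow_of_exponent_ge hd hd1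
    push_cast; linarith
  exact this
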